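/- Let W ⊆ ℝⁿ be the direction (translation subspace) of the affine span of S. If the target vector x⁰ lies in the relative interior of conv(S), then D(x⁰) = W^⊥, the orthogonal complement of W; consequently, the orthogonal projection of the estimated objective c onto W^⊥ is the unique minimizer of the Euclidean distance ‖c − d‖₂ over d ∈ D(x⁰). -/

import Mathlib

open scoped RealInnerProductSpace

/-- If x⁰ is in the relative interior of conv(S), then D(x⁰) = W^⊥
(W the direction of the affine span of S) and the orthogonal projection of c onto
W^⊥ is the unique minimizer of ‖c − d‖ over D(x⁰). -/
theorem stmt_8 (n : ℕ) (hn : 1 ≤ n)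
    (S : Set (EuclideanSpace ℝ (Fin n))) (hS : S.Nonempty)
    (x0 c : EuclideanSpace ℝ (Fin n))
    (hx0 : x0 ∈ intrinsicInterior ℝ (convexHull ℝ S)) :
    let W : Submodule ℝ (EuclideanSpace ℝ (Fin n)) := (affineSpan ℝ S).direction
    let D : Set (EuclideanSpace ℝ (Fin n)) := {d | ∀ x ∈ S, ⟪d, x - x0⟫ ≤ 0}
    let p : EuclideanSpace ℝ (Fin n) := (Submodule.orthogonalProjection Wᗮ c : EuclideanSpace ℝ (Fin n))
    D = (Wᗮ : Set (EuclideanSpace ℝ (Fin n))) ∧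
    p ∈ D ∧ (∀ d ∈ D, ‖c - p‖ ≤ ‖c - d‖) ∧ (∀ d ∈ D, ‖c - d‖ = ‖c - p‖ → d = p) := by
  intro W D p
  have hx0ch : x0 ∈ convexHull ℝ S := intrinsicInterior_subset hx0
  have hx0span : x0 ∈ affineSpan ℝ S := by
    have := subset_affineSpan ℝ (convexHull ℝ S) hx0ch
    rwa [affineSpan_convexHull] at this
  -- D = Wᗮ
  have hDW : D = (Wᗮ : Set (EuclideanSpace ℝ (Fin n))) := by
    ext d
    simp only [D, Set.mem_setOf_eq, SetLike.mem_coe, Submodule.mem_orthogonal]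
    constructor
    · intro hd
      -- the inequality extends to the convex hull
      have hch : ∀ z ∈ convexHull ℝ S, ⟪d, z - x0⟫ ≤ 0 := by
        have hconv : Convex ℝ {x : EuclideanSpace ℝ (Fin n) | ⟪d, x⟫ ≤ ⟪d, x0⟫} :=
          convex_halfSpace_le
            ⟨fun a b => inner_add_right _ _ _, fun r a => real_inner_smul_right _ _ _⟩ _
        intro z hz
        have hz' : z ∈ {x : EuclideanSpace ℝ (Fin n) | ⟪d, x⟫ ≤ ⟪d, x0⟫} :=
          convexHull_min (fun x hx => by
            simpa [inner_sub_right, sub_nonpos] using hd x hx) hconv hz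
        simpa [inner_sub_right, sub_nonpos] using hz'
      -- extract a ball from the intrinsic interior hypothesis
      obtain ⟨y, hy, hyx⟩ := mem_intrinsicInterior.1 hx0
      obtain ⟨ε, εpos, hball⟩ := Metric.isOpen_iff.1 isOpen_interior y hy
      have hsub : Metric.ball y ε ⊆
          ((↑) ⁻¹' convexHull ℝ S : Set <| affineSpan ℝ (convexHull ℝ S)) :=
        hball.trans interior_subset
      have key : ∀ v ∈ W, ⟪d, v⟫ ≤ 0 := by
        intro v hv
        set t : ℝ := ε / (2 * (‖v‖ + 1)) with ht_def
        have ht : 0 < t := by positivity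
        have hz : x0 + t • v ∈ affineSpan ℝ S := by
          have := AffineSubspace.vadd_mem_of_mem_direction
            (Submodule.smul_mem W t hv) hx0span
          simpa [add_comm] using this
        have hzmem : x0 + t • v ∈ (affineSpan ℝ (convexHull ℝ S) : Set _) := by
          rw [affineSpan_convexHull]; exact hz
        have hzball : (⟨x0 + t • v, hzmem⟩ : affineSpan ℝ (convexHull ℝ S)) ∈
            Metric.ball y ε := by
          rw [Metric.mem_ball, Subtype.dist_eq, hyx]
          have : dist (x0 + t • v) x0 = t * ‖v‖ := by
            rw [dist_eq_norm]
            simp [norm_smul, abs_of_pos ht]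
          rw [this]
          have h1 : t * ‖v‖ < t * (2 * (‖v‖ + 1)) := by nlinarith [norm_nonneg v]
          have h2 : t * (2 * (‖v‖ + 1)) = ε := by
            rw [ht_def, div_mul_cancel₀]; positivity
          linarith
        have hzch : x0 + t • v ∈ convexHull ℝ S := hsub hzball
        have := hch _ hzch
        have h3 : ⟪d, x0 + t • v - x0⟫ = t * ⟪d, v⟫ := by
          rw [add_sub_cancel_left, real_inner_smul_right]
        rw [h3] at this
        nlinarith
      intro u hu
      have h1 := key u hu
      have h2 := key (-u) (Submodule.neg_mem W hu)
      rw [inner_neg_right] at h2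
      rw [real_inner_comm]
      linarith
    · intro hd x hx
      have hxW : x - x0 ∈ W := by
        have := AffineSubspace.vsub_mem_direction (subset_affineSpan ℝ S hx) hx0span
        simpa using this
      have := hd _ hxW
      rw [real_inner_comm] at this
      rw [this]
  refine ⟨hDW, ?_, ?_, ?_⟩
  · rw [hDW]
    exact (Submodule.orthogonalProjection Wᗮ c).2
  all_goals {
    have hcp : c - p ∈ (Wᗮ)ᗮ := Submodule.sub_starProjection_mem_orthogonal (K := Wᗮ) c
    have hpW : p ∈ Wᗮ := (Submodule.orthogonalProjection Wᗮ c).2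
    intro d hd
    rw [hDW] at hd
    have hpd : p - d ∈ Wᗮ := Submodule.sub_mem _ hpW hd
    have horth : ⟪c - p, p - d⟫ = 0 := by
      rw [real_inner_comm]; exact hcp _ hpd
    have hsplit : c - d = (c - p) + (p - d) := by abel
    have hsq : ‖c - d‖ ^ 2 = ‖c - p‖ ^ 2 + ‖p - d‖ ^ 2 := by
      rw [hsplit, norm_add_sq_real, horth]; ring
    first
    | nlinarith [norm_nonneg (c - p), norm_nonneg (c - d), sq_nonneg ‖p - d‖]
    | { intro heq
        have hz2 : ‖p - d‖ ^ 2 = 0 := by rw [heq] at hsq; linarith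
        have hz : p - d = 0 := by
          have := (pow_eq_zero_iff (n := 2) (by norm_num)).1 hz2
          simpa using this
        exact (sub_eq_zero.1 hz).symm }
  }
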